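/- Let $q_t(\alpha,\beta)$ satisfy $q_0 = 1$, $q_1 = \alpha$, $q_2 = (\alpha-\beta)^2$, and $q_t = (\alpha-\beta)q_{t-1} - \beta(\alpha-\beta)q_{t-2} + \beta^3 q_{t-3}$ for $t \geq 3$. If $0 \leq 4\beta < \alpha$, then for all $t \geq 0$, $q_t(\alpha,\beta) = \frac{1}{\alpha - 4\beta}\big[ (\tfrac{\sqrt{\alpha}}{2} + \tfrac{\sqrt{\alpha-4\beta}}{2})^{t+1} - (\tfrac{\sqrt{\alpha}}{2} - \tfrac{\sqrt{\alpha-4\beta}}{2})^{t+1} \big]^2 \geq 0$. -/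
import Mathlib


theorem stmt_7 (α β : ℝ) (hβ : 0 ≤ β) (hαβ : 4 * β < α)
    (q : ℕ → ℝ)
    (hq0 : q 0 = 1) (hq1 : q 1 = α) (hq2 : q 2 = (α - β) ^ 2)
    (hqrec : ∀ t, q (t + 3) =
      (α - β) * q (t + 2) - β * (α - β) * q (t + 1) + β ^ 3 * q t) :
    ∀ t, q t =
      (1 / (α - 4 * β)) *
        ((Real.sqrt α / 2 + Real.sqrt (α - 4 * β) / 2) ^ (t + 1) -
         (Real.sqrt α / 2 - Real.sqrt (α - 4 * β) / 2) ^ (t + 1)) ^ 2 ∧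
      0 ≤ q t := by
  have hα0 : (0:ℝ) ≤ α := by linarith
  have hd0 : (0:ℝ) < α - 4 * β := by linarith
  set s := Real.sqrt α with hs
  set r := Real.sqrt (α - 4 * β) with hr
  have hsq : s ^ 2 = α := Real.sq_sqrt hα0
  have hrq : r ^ 2 = α - 4 * β := Real.sq_sqrt hd0.le
  set a := s / 2 + r / 2 with hadef
  set b := s / 2 - r / 2 with hbdef
  have hA : (a + b) ^ 2 = α := by rw [hadef, hbdef]; linear_combination hsq
  have hB : a * b = β := by rw [hadef, hbdef]; linear_combination hsq / 4 - hrq / 4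
  have hd : (a - b) ^ 2 = α - 4 * β := by rw [hadef, hbdef]; linear_combination hrq
  have hdne : α - 4 * β ≠ 0 := ne_of_gt hd0
  set F : ℕ → ℝ := fun t => 1 / (α - 4 * β) * (a ^ (t + 1) - b ^ (t + 1)) ^ 2 with hF
  have f0 : F 0 = 1 := by
    simp only [hF]
    field_simp
    linear_combination hd
  have f1 : F 1 = α := by
    simp only [hF]
    field_simp
    linear_combination (a - b) ^ 2 * hA + α * hd
  have f2 : F 2 = (α - β) ^ 2 := by
    simp only [hF]
    field_simp
    linear_combination ((a - b) ^ 2 * ((a ^ 2 + a * b + b ^ 2) + α - β)) * hA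
      - ((a - b) ^ 2 * ((a ^ 2 + a * b + b ^ 2) + α - β)) * hB + (α - β) ^ 2 * hd
  have keyrec : ∀ t : ℕ, F (t + 3) =
      (α - β) * F (t + 2) - β * (α - β) * F (t + 1) + β ^ 3 * F t := by
    intro t
    simp only [hF, pow_succ]
    rw [show (α:ℝ) = (a + b) ^ 2 from hA.symm, show (β:ℝ) = a * b from hB.symm]
    ring
  have key : ∀ t, q t = F t ∧ q (t + 1) = F (t + 1) ∧ q (t + 2) = F (t + 2) := by
    intro t
    induction t with
    | zero => exact ⟨by rw [hq0, f0], by rw [hq1, f1], by rw [hq2, f2]⟩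
    | succ n ih =>
        refine ⟨ih.2.1, ih.2.2, ?_⟩
        rw [hqrec n, ih.1, ih.2.1, ih.2.2, keyrec n]
  intro t
  have hqt : q t = F t := (key t).1
  constructor
  · rw [hqt]
  · rw [hqt]; simp only [hF]
    exact mul_nonneg (by positivity) (sq_nonneg _)
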